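/- Let c be the multiplicative function with c(2^k)=k and c(p^k)=1+k−k/p for odd primes p. Then for Re(s) > 1, ∑_{n=1}^{∞} c(n) n^{−s} = ((4^s − 2^s + 1)/(4^s − 2^{s−1})) · ζ(s)²/ζ(s+1). -/

import Mathlib

open ArithmeticFunction LSeries Complex Finset
open scoped LSeries.notation
open scoped ArithmeticFunction.Moebius ArithmeticFunction.zeta

namespace DirichletSeriesCAux

noncomputable def coef : ℕ → ℂ :=
  fun k => if k = 0 then 1 else if k = 1 then -(1/2) else 3 / 2 ^ k

noncomputable def T : ArithmeticFunction ℂ :=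
  ⟨fun n => if n = 2 ^ Nat.log 2 n then coef (Nat.log 2 n) else 0, by simp⟩

lemma T_apply (n : ℕ) :
    T n = if n = 2 ^ Nat.log 2 n then coef (Nat.log 2 n) else 0 := rfl

lemma T_pow (k : ℕ) : T (2 ^ k) = coef k := by
  rw [T_apply, Nat.log_pow one_lt_two, if_pos rfl]

lemma T_one : T 1 = 1 := by
  have := T_pow 0
  simpa [coef] using this

lemma T_eq_zero {n : ℕ} (h : ∀ k, n ≠ 2 ^ k) : T n = 0 := by
  rw [T_apply, if_neg (h _)]

lemma T_mult : T.IsMultiplicative := by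
  constructor
  · exact T_one
  · intro m n hmn
    by_cases hm : ∃ a, m = 2 ^ a
    · obtain ⟨a, rfl⟩ := hm
      by_cases hn : ∃ b, n = 2 ^ b
      · obtain ⟨b, rfl⟩ := hn
        rcases Nat.eq_zero_or_pos a with rfl | ha
        · simp [T_one]
        rcases Nat.eq_zero_or_pos b with rfl | hb
        · simp [T_one]
        · exfalso
          have h2a : (2:ℕ) ∣ 2 ^ a := dvd_pow_self 2 ha.ne'
          have h2b : (2:ℕ) ∣ 2 ^ b := dvd_pow_self 2 hb.ne'
          have := Nat.dvd_gcd h2a h2b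
          rw [Nat.Coprime] at hmn
          rw [hmn] at this
          norm_num at this
      · push_neg at hn
        have h1 : T n = 0 := T_eq_zero hn
        have h2 : T (2 ^ a * n) = 0 := by
          apply T_eq_zero
          intro k hk
          have hdvd : n ∣ 2 ^ k := by
            rw [← hk]; exact dvd_mul_left n (2 ^ a)
          obtain ⟨j, _, hj⟩ := (Nat.dvd_prime_pow Nat.prime_two).mp hdvd
          exact hn j hj
        rw [h1, h2, mul_zero]
    · push_neg at hm
      have h1 : T m = 0 := T_eq_zero hm
      have h2 : T (m * n) = 0 := by
        apply T_eq_zero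
        intro k hk
        have hdvd : m ∣ 2 ^ k := by
          rw [← hk]; exact dvd_mul_right m n
        obtain ⟨j, _, hj⟩ := (Nat.dvd_prime_pow Nat.prime_two).mp hdvd
        exact hm j hj
      rw [h1, h2, zero_mul]

noncomputable def M : ArithmeticFunction ℂ := ⟨fun n => (μ n : ℂ) / n, by simp⟩

lemma M_apply (n : ℕ) : M n = (μ n : ℂ) / n := rfl

lemma M_mult : M.IsMultiplicative := by
  constructor
  · simp [M_apply]
  · intro m n h
    rcases eq_or_ne m 0 with rfl | hm
    · simp [M_apply]
    rcases eq_or_ne n 0 with rfl | hn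
    · simp [M_apply]
    · have hmu := isMultiplicative_moebius.map_mul_of_coprime h
      simp only [M_apply, hmu, Nat.cast_mul]
      push_cast
      rw [mul_div_mul_comm]

noncomputable def Zc : ArithmeticFunction ℂ := ↑(ζ : ArithmeticFunction ℕ)

lemma Zc_mult : Zc.IsMultiplicative := isMultiplicative_zeta.natCast

lemma Zc_apply_ne {n : ℕ} (hn : n ≠ 0) : Zc n = 1 := by
  simp [Zc, natCoe_apply, zeta_apply, hn]

lemma mul_pp (f g : ArithmeticFunction ℂ) {p : ℕ} (hp : p.Prime) (k : ℕ) :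
    (f * g) (p ^ k) = ∑ i ∈ Finset.range (k + 1), f (p ^ i) * g (p ^ (k - i)) := by
  rw [ArithmeticFunction.mul_apply,
    Nat.sum_divisorsAntidiagonal (f := fun a b => f a * g b),
    Nat.sum_divisors_prime_pow hp]
  refine Finset.sum_congr rfl fun i hi => ?_
  rw [Nat.pow_div (Finset.mem_range_succ_iff.mp hi) hp.pos]

lemma sumM {p : ℕ} (hp : p.Prime) :
    ∀ k, 1 ≤ k → ∑ i ∈ Finset.range (k + 1), M (p ^ i) = 1 - 1 / (p : ℂ) := by
  intro k hk
  induction k with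
  | zero => omega
  | succ k ih =>
    rcases Nat.eq_zero_or_pos k with rfl | hk'
    · rw [Finset.sum_range_succ, Finset.sum_range_one]
      simp only [pow_zero, pow_one, M_apply]
      rw [moebius_apply_one, moebius_apply_prime hp]
      push_cast
      ring
    · rw [Finset.sum_range_succ, ih hk']
      have : M (p ^ (k + 1)) = 0 := by
        rw [M_apply, moebius_apply_prime_pow hp (by omega), if_neg (by omega)]
        simp
      rw [this, add_zero]

lemma ZM_pp {p : ℕ} (hp : p.Prime) {k : ℕ} (hk : 1 ≤ k) :
    (M * Zc) (p ^ k) = 1 - 1 / (p : ℂ) := by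
  rw [mul_pp M Zc hp k]
  rw [← sumM hp k hk]
  refine Finset.sum_congr rfl fun i hi => ?_
  rw [Zc_apply_ne (pow_ne_zero _ hp.pos.ne'), mul_one]

lemma sumZM {p : ℕ} (hp : p.Prime) (k : ℕ) :
    ∑ i ∈ Finset.range (k + 1), (M * Zc) (p ^ i) = 1 + k * (1 - 1 / (p : ℂ)) := by
  induction k with
  | zero =>
    rw [Finset.sum_range_one, pow_zero, (M_mult.mul Zc_mult).map_one]
    norm_num
  | succ k ih =>
    rw [Finset.sum_range_succ, ih, ZM_pp hp (by omega)]
    push_cast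
    ring

lemma BIG_pp {p : ℕ} (hp : p.Prime) (k : ℕ) :
    ((M * Zc) * Zc) (p ^ k) = 1 + k * (1 - 1 / (p : ℂ)) := by
  rw [mul_pp _ Zc hp k]
  have hz : ∀ i ∈ Finset.range (k + 1),
      (M * Zc) (p ^ i) * Zc (p ^ (k - i)) = (M * Zc) (p ^ i) := by
    intro i hi
    rw [Zc_apply_ne (pow_ne_zero _ hp.pos.ne'), mul_one]
  rw [Finset.sum_congr rfl hz, sumZM hp k]

lemma coef_succ_succ (k : ℕ) : coef (k + 2) = 3 / 2 ^ (k + 2) := by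
  simp only [coef]
  rw [if_neg (by omega), if_neg (by omega)]

lemma Asum : ∀ k : ℕ, 1 ≤ k →
    ∑ i ∈ Finset.range (k + 1), coef i = 2 - 3 / 2 ^ k := by
  intro k hk
  induction k with
  | zero => omega
  | succ k ih =>
    rcases Nat.eq_zero_or_pos k with rfl | hk'
    · rw [Finset.sum_range_succ, Finset.sum_range_one]
      norm_num [coef]
    · rw [Finset.sum_range_succ, ih hk']
      obtain ⟨j, rfl⟩ : ∃ j, k = j + 1 := ⟨k - 1, by omega⟩
      rw [coef_succ_succ]
      have h2 : (2:ℂ) ^ (j + 1) ≠ 0 := pow_ne_zero _ two_ne_zero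
      have h2' : (2:ℂ) ^ (j + 1 + 1) ≠ 0 := pow_ne_zero _ two_ne_zero
      field_simp
      ring

lemma Ssum : ∀ k : ℕ, 1 ≤ k →
    ∑ i ∈ Finset.range (k + 1), coef i * (1 + ((k : ℂ) - i) * (1 / 2)) = k := by
  intro k hk
  induction k with
  | zero => omega
  | succ k ih =>
    rcases Nat.eq_zero_or_pos k with rfl | hk'
    · rw [Finset.sum_range_succ, Finset.sum_range_one]
      norm_num [coef]
    · rw [Finset.sum_range_succ]
      have hsplit : ∑ i ∈ Finset.range (k + 1), coef i * (1 + (((k:ℂ)+1) - i) * (1 / 2))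
          = (∑ i ∈ Finset.range (k + 1), coef i * (1 + ((k : ℂ) - i) * (1 / 2)))
            + (∑ i ∈ Finset.range (k + 1), coef i) * (1 / 2) := by
        rw [show (∑ i ∈ Finset.range (k + 1), coef i) * (1 / 2)
            = ∑ i ∈ Finset.range (k + 1), coef i * (1/2) from Finset.sum_mul ..,
          ← Finset.sum_add_distrib]
        refine Finset.sum_congr rfl fun i _ => ?_
        ring
      push_cast
      rw [hsplit, ih hk', Asum k hk']
      obtain ⟨j, rfl⟩ : ∃ j, k = j + 1 := ⟨k - 1, by omega⟩
      rw [coef_succ_succ]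
      have h2 : (2:ℂ) ^ (j + 1) ≠ 0 := pow_ne_zero _ two_ne_zero
      have h2' : (2:ℂ) ^ (j + 1 + 2) ≠ 0 := pow_ne_zero _ two_ne_zero
      push_cast
      field_simp
      ring

lemma coef_norm_le (k : ℕ) : ‖coef k‖ ≤ 1 := by
  match k with
  | 0 => simp [coef]
  | 1 => simp [coef]; norm_num
  | (j+2) =>
    rw [coef_succ_succ]
    rw [norm_div, norm_pow]
    simp only [Complex.norm_ofNat]
    rw [div_le_one (by positivity)]
    calc (3:ℝ) ≤ 2 ^ 2 := by norm_num
    _ ≤ 2 ^ (j + 2) := by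
        apply pow_le_pow_right₀ one_le_two
        omega

lemma T_norm_le (n : ℕ) : ‖T n‖ ≤ 1 := by
  rw [T_apply]
  split
  · exact coef_norm_le _
  · simp

end DirichletSeriesCAux

open DirichletSeriesCAux

theorem dirichlet_series_c (c : ℕ → ℝ)
    (hc1 : c 1 = 1)
    (hcmul : ∀ m n : ℕ, Nat.Coprime m n → c (m * n) = c m * c n)
    (hc2 : ∀ k : ℕ, 1 ≤ k → c (2 ^ k) = k)
    (hcp : ∀ p k : ℕ, p.Prime → Odd p → 1 ≤ k → c (p ^ k) = 1 + k - k / p)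
    (s : ℂ) (hs : 1 < s.re) :
    ∑' n : ℕ+, (c n : ℂ) / (n : ℂ) ^ s
      = ((4 ^ s - 2 ^ s + 1) / (4 ^ s - 2 ^ (s - 1)))
          * riemannZeta s ^ 2 / riemannZeta (s + 1) := by
  classical
  set C : ArithmeticFunction ℂ := ⟨fun n => if n = 0 then 0 else (c n : ℂ), by simp⟩ with hCdef
  have C_apply : ∀ n : ℕ, C n = if n = 0 then 0 else (c n : ℂ) := fun n => rfl
  have C_mult : C.IsMultiplicative := by
    constructor
    · rw [C_apply]; simp [hc1]
    · intro m n h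
      rcases eq_or_ne m 0 with rfl | hm
      · have hn1 : n = 1 := (Nat.coprime_zero_left n).mp h
        subst hn1
        simp [C_apply, hc1]
      rcases eq_or_ne n 0 with rfl | hn
      · have hm1 : m = 1 := (Nat.coprime_zero_right m).mp h
        subst hm1
        simp [C_apply, hc1]
      · rw [C_apply, C_apply, C_apply, if_neg (mul_ne_zero hm hn), if_neg hm, if_neg hn,
          hcmul m n h]
        push_cast
        ring
  -- the key identity of arithmetic functions
  have key : C = T * ((M * Zc) * Zc) := by
    rw [ArithmeticFunction.IsMultiplicative.eq_iff_eq_on_prime_powers C C_mult _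
      (T_mult.mul ((M_mult.mul Zc_mult).mul Zc_mult))]
    intro p k hp
    rcases Nat.eq_zero_or_pos k with rfl | hk
    · rw [pow_zero, C_mult.map_one, (T_mult.mul ((M_mult.mul Zc_mult).mul Zc_mult)).map_one]
    rw [mul_pp T _ hp k]
    by_cases hp2 : p = 2
    · subst hp2
      have hL : C (2 ^ k) = (k : ℂ) := by
        rw [C_apply, if_neg (pow_ne_zero _ (by norm_num)), hc2 k hk]
        push_cast
        ring
      rw [hL]
      rw [show ∑ i ∈ Finset.range (k + 1), T (2 ^ i) * ((M * Zc) * Zc) (2 ^ (k - i))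
          = ∑ i ∈ Finset.range (k + 1), coef i * (1 + ((k : ℂ) - i) * (1 / 2)) from ?_,
        Ssum k hk]
      refine Finset.sum_congr rfl fun i hi => ?_
      rw [T_pow, BIG_pp Nat.prime_two,
        Nat.cast_sub (Finset.mem_range_succ_iff.mp hi)]
      norm_num
    · have hodd : Odd p := hp.odd_of_ne_two hp2
      have hL : C (p ^ k) = ((1 + (k:ℝ) - (k:ℝ) / (p:ℝ) : ℝ) : ℂ) := by
        rw [C_apply, if_neg (pow_ne_zero _ hp.pos.ne'), hcp p k hp hodd hk]
      rw [hL]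
      rw [Finset.sum_eq_single_of_mem 0 (Finset.mem_range.mpr (by omega)) ?side]
      · rw [pow_zero, T_one, one_mul, Nat.sub_zero, BIG_pp hp]
        push_cast
        ring
      · intro i _ hi0
        have hT0 : T (p ^ i) = 0 := by
          apply T_eq_zero
          intro j hj
          have hpd : p ∣ 2 ^ j := by
            rw [← hj]; exact dvd_pow_self p hi0
          have := hp.dvd_of_dvd_pow (n := j) (m := 2) hpd
          have hp2' : p = 2 := (Nat.prime_dvd_prime_iff_eq hp Nat.prime_two).mp this
          exact hp2 hp2'
        rw [hT0, zero_mul]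
  -- summability
  have hT : LSeriesSummable ↗T s :=
    LSeriesSummable_of_bounded_of_one_lt_re (m := 1) (fun n _ => T_norm_le n) hs
  have hM : LSeriesSummable ↗M s := by
    refine LSeriesSummable_of_bounded_of_one_lt_re (m := 1) (fun n hn => ?_) hs
    rw [M_apply]
    have h1 : ‖((μ n : ℤ) : ℂ)‖ ≤ 1 := by
      rw [Complex.norm_intCast]
      exact_mod_cast abs_moebius_le_one (n := n)
    have h2 : (1:ℝ) ≤ ‖(n : ℂ)‖ := by
      rw [Complex.norm_natCast]
      exact_mod_cast Nat.one_le_iff_ne_zero.mpr hn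
    calc ‖(μ n : ℂ) / n‖ = ‖((μ n : ℤ) : ℂ)‖ / ‖(n : ℂ)‖ := by
          rw [← norm_div]
    _ ≤ 1 := by
        rw [div_le_one (by linarith)]
        linarith
  have hZ : LSeriesSummable ↗Zc s := by
    refine LSeriesSummable_of_bounded_of_one_lt_re (m := 1) (fun n hn => ?_) hs
    rw [Zc_apply_ne hn]
    simp
  have hMZ : LSeriesSummable ↗(M * Zc) s := ArithmeticFunction.LSeriesSummable_mul hM hZ
  have hBIG : LSeriesSummable ↗((M * Zc) * Zc) s := ArithmeticFunction.LSeriesSummable_mul hMZ hZ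
  -- step 1 : the sum is the L-series of C
  have h1 : ∑' n : ℕ+, (c n : ℂ) / (n : ℂ) ^ s = LSeries ↗C s := by
    rw [LSeries]
    have hinj : Function.Injective (fun n : ℕ+ => (n : ℕ)) := fun a b h => PNat.coe_injective h
    have hsupp : Function.support (LSeries.term ↗C s) ⊆ Set.range (fun n : ℕ+ => (n : ℕ)) := by
      intro n hn
      rcases eq_or_ne n 0 with rfl | hn0
      · simp [LSeries.term_zero] at hn
      · exact ⟨⟨n, Nat.pos_of_ne_zero hn0⟩, rfl⟩
    rw [← Function.Injective.tsum_eq hinj hsupp]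
    refine tsum_congr fun n => ?_
    rw [LSeries.term_of_ne_zero n.pos.ne' ↗C s]
    rw [C_apply, if_neg n.pos.ne']
  -- step 2 : L-series of moebius-over-n
  have hs1 : 1 < (s + 1).re := by
    simp only [Complex.add_re, Complex.one_re]
    linarith
  have hMval : LSeries ↗M s = (riemannZeta (s + 1))⁻¹ := by
    have hterm : ∀ n : ℕ, LSeries.term ↗M s n = LSeries.term ↗μ (s + 1) n := by
      intro n
      rcases eq_or_ne n 0 with rfl | hn
      · simp
      · rw [LSeries.term_of_ne_zero hn, LSeries.term_of_ne_zero hn, M_apply,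
          Complex.cpow_add _ _ (Nat.cast_ne_zero.mpr hn), Complex.cpow_one, div_div,
          mul_comm ((n:ℂ)) ((n:ℂ) ^ s)]
    have hLM : LSeries ↗M s = LSeries ↗μ (s + 1) := tsum_congr hterm
    have hmul := ArithmeticFunction.LSeries_zeta_mul_Lseries_moebius hs1
    rw [ArithmeticFunction.LSeries_zeta_eq_riemannZeta hs1] at hmul
    rw [hLM]
    field_simp [riemannZeta_ne_zero_of_one_lt_re hs1] at hmul ⊢
    linear_combination hmul
  have hZval : LSeries ↗Zc s = riemannZeta s := by
    have : ↗Zc = ↗(ζ : ArithmeticFunction ℕ) := by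
      funext n
      simp [Zc, natCoe_apply]
    rw [this]
    exact ArithmeticFunction.LSeries_zeta_eq_riemannZeta hs
  -- step 3 : L-series of T
  set y : ℂ := (2 : ℂ) ^ s with hy
  have hynorm : ‖y‖ = (2 : ℝ) ^ s.re := by
    rw [hy, show (2:ℂ) = ((2:ℝ):ℂ) by norm_num, 
      Complex.norm_cpow_eq_rpow_re_of_pos (by norm_num)]
  have hygt : 2 < ‖y‖ := by
    rw [hynorm]
    calc (2:ℝ) = 2 ^ (1:ℝ) := (Real.rpow_one 2).symm
    _ < 2 ^ s.re := (Real.rpow_lt_rpow_left_iff (by norm_num : (1:ℝ) < 2)).mpr hs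
  have hyne : y ≠ 0 := by
    intro h
    rw [h, norm_zero] at hygt
    linarith
  have hzlt : ‖y⁻¹‖ < 1 / 2 := by
    rw [norm_inv]
    rw [lt_div_iff₀ (by norm_num)]
    rw [inv_mul_lt_iff₀ (by linarith)]
    linarith
  have hTval : LSeries ↗T s = (4 ^ s - 2 ^ s + 1) / (4 ^ s - 2 ^ (s - 1)) := by
    have hinj : Function.Injective (fun k : ℕ => 2 ^ k) :=
      fun a b h => Nat.pow_right_injective (le_refl 2) h
    have hsupp : Function.support (LSeries.term ↗T s) ⊆ Set.range (fun k : ℕ => 2 ^ k) := by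
      intro n hn
      have hn0 : n ≠ 0 := by
        intro h; rw [h] at hn; simp [LSeries.term_zero] at hn
      have hTn : T n ≠ 0 := by
        intro h
        apply hn
        rw [LSeries.term_of_ne_zero hn0]
        simp [h]
      by_contra hr
      apply hTn
      apply T_eq_zero
      intro k hk
      exact hr ⟨k, hk.symm⟩
    have hre : LSeries ↗T s = ∑' k : ℕ, LSeries.term ↗T s (2 ^ k) :=
      (Function.Injective.tsum_eq hinj hsupp).symm
    have hterm : ∀ k : ℕ, LSeries.term ↗T s (2 ^ k) = coef k * (y⁻¹) ^ k := by
      intro k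
      rw [LSeries.term_of_ne_zero (pow_ne_zero _ two_ne_zero), T_pow]
      have hcast : ((2 ^ k : ℕ) : ℂ) = (2 : ℂ) ^ (k : ℕ) := by push_cast; ring
      rw [hcast]
      have harg2 : Complex.arg 2 = 0 := by
        rw [show (2:ℂ) = ((2:ℝ):ℂ) by norm_num]
        exact Complex.arg_ofReal_of_nonneg (by norm_num)
      have harg : ((2:ℂ) ^ (k:ℕ)) ^ s = ((2:ℂ) ^ s) ^ (k:ℕ) := by
        rw [← Complex.cpow_nat_mul' (x := (2:ℂ)) (n := k)
          (by rw [harg2]; simpa using Real.pi_pos)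
          (by rw [harg2]; simpa using Real.pi_pos.le),
          Complex.cpow_nat_mul]
      rw [harg, div_eq_mul_inv, ← inv_pow]
    rw [hre]
    rw [tsum_congr hterm]
    -- sum the series
    have hsummable : Summable (fun k : ℕ => coef k * (y⁻¹) ^ k) := by
      refine Summable.of_norm_bounded (g := fun k => 1 * ‖y⁻¹‖ ^ k) ?_ ?_
      · exact (summable_geometric_of_lt_one (norm_nonneg _) (by linarith)).mul_left 1
      · intro k
        rw [norm_mul, norm_pow]
        exact mul_le_mul_of_nonneg_right (coef_norm_le k) (by positivity)
    set z : ℂ := y⁻¹ with hz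
    have hzhalf : ‖z / 2‖ < 1 := by
      rw [norm_div]
      simp only [Complex.norm_ofNat]
      rw [div_lt_one (by norm_num)]
      linarith
    have h1ne : (1 : ℂ) - z / 2 ≠ 0 := by
      intro h
      have : z / 2 = 1 := by linear_combination -h
      rw [this] at hzhalf
      simp at hzhalf
    rw [Summable.tsum_eq_zero_add hsummable, Summable.tsum_eq_zero_add ((summable_nat_add_iff 1).mpr hsummable)]
    have htail : ∑' k : ℕ, coef (k + 1 + 1) * z ^ (k + 1 + 1)
        = 3 * (z / 2) ^ 2 * (1 - z / 2)⁻¹ := by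
      have hterm2 : ∀ k : ℕ, coef (k + 1 + 1) * z ^ (k + 1 + 1)
          = (3 * (z / 2) ^ 2) * (z / 2) ^ k := by
        intro k
        rw [show k + 1 + 1 = k + 2 by ring, coef_succ_succ]
        rw [div_pow, pow_add, div_pow]
        have h2k : (2:ℂ) ^ (k + 2) = 2 ^ k * 2 ^ 2 := by ring
        field_simp
        ring
      rw [tsum_congr hterm2, tsum_mul_left, tsum_geometric_of_norm_lt_one hzhalf]
    rw [htail]
    have hc0 : coef 0 = 1 := by simp [coef]
    have hc1' : coef 1 = -(1/2) := by simp [coef]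
    rw [hc0, hc1']
    -- algebraic computation
    have h4s : (4 : ℂ) ^ s = y * y := by
      rw [show (4:ℂ) = ((2:ℝ):ℂ) * ((2:ℝ):ℂ) by norm_num,
        Complex.mul_cpow_ofReal_nonneg (by norm_num) (by norm_num)]
      rw [hy]
      norm_num
    have h2s1 : (2 : ℂ) ^ (s - 1) = y / 2 := by
      rw [Complex.cpow_sub _ _ (by norm_num : (2:ℂ) ≠ 0), Complex.cpow_one, hy]
    rw [h4s, h2s1]
    have hden : y * y - y / 2 ≠ 0 := by
      have hfac : y * y - y / 2 = y * (y - 1/2) := by ring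
      rw [hfac]
      apply mul_ne_zero hyne
      intro h
      have hy12 : y = 1/2 := by linear_combination h
      rw [hy12] at hygt
      norm_num at hygt
    have hyz : y * z = 1 := mul_inv_cancel₀ hyne
    have hfrac : (y * y - y + 1) / (y * y - y / 2) = (1 - z + z ^ 2) / (1 - z / 2) := by
      rw [div_eq_div_iff hden h1ne]
      linear_combination (-1 + y/2 + z/2 - y*z) * hyz
    rw [hfrac, eq_div_iff h1ne]
    linear_combination (3 * (z / 2) ^ 2) * inv_mul_cancel₀ h1ne
  -- put everything together
  rw [h1, key, ArithmeticFunction.LSeries_mul' hT hBIG,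
    ArithmeticFunction.LSeries_mul' hMZ hZ, ArithmeticFunction.LSeries_mul' hM hZ,
    hMval, hZval, hTval]
  rw [div_eq_mul_inv, div_eq_mul_inv]
  ring
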